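/- arXiv:2009.09623 — 4 statements merged into one kernel-verified Lean document; each statement's English description precedes it below -/
import Mathlib

section
/- For the function h(x) = 2^{-1/x} + 2^{-1/(1-x)} defined on (0,1), it holds that 1/4 ≤ h(x) ≤ 1 for all x ∈ (0,1). -/
lemma le_two_rpow {t : ℝ} (ht : 1 ≤ t) : t ≤ (2 : ℝ) ^ t := by
  have h1 : (2 : ℝ) ^ t = 2 * Real.exp ((t - 1) * Real.log 2) := by
    rw [Real.rpow_def_of_pos (by norm_num : (0:ℝ) < 2)]
    rw [show (2:ℝ) * Real.exp ((t - 1) * Real.log 2) =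
      Real.exp (Real.log 2) * Real.exp ((t - 1) * Real.log 2) by
        rw [Real.exp_log]; norm_num, ← Real.exp_add]
    ring_nf
  have h2 : (t - 1) * Real.log 2 + 1 ≤ Real.exp ((t - 1) * Real.log 2) :=
    Real.add_one_le_exp _
  have hl : Real.log 2 > 0.6931471803 := Real.log_two_gt_d9
  nlinarith

lemma rpow_neg_inv_le {x : ℝ} (hx : 0 < x) (hx1 : x ≤ 1) :
    (2 : ℝ) ^ (-1 / x) ≤ x := by
  have ht : 1 ≤ 1 / x := by
    rw [le_div_iff₀ hx]; linarith
  have key := le_two_rpow ht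
  have h2 : (2 : ℝ) ^ (-1 / x) = 1 / (2 : ℝ) ^ (1 / x) := by
    rw [neg_div, Real.rpow_neg (by norm_num)]
    simp [one_div]
  rw [h2]
  have hp : (0 : ℝ) < (2 : ℝ) ^ (1 / x) := Real.rpow_pos_of_pos (by norm_num) _
  rw [div_le_iff₀ hp]
  calc (1 : ℝ) = x * (1 / x) := by field_simp
    _ ≤ x * (2 : ℝ) ^ (1 / x) := by
        exact mul_le_mul_of_nonneg_left key hx.le

theorem stmt2 :
    ∀ x ∈ Set.Ioo (0 : ℝ) 1,
      1 / 4 ≤ (2 : ℝ) ^ (-1 / x) + (2 : ℝ) ^ (-1 / (1 - x)) ∧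
      (2 : ℝ) ^ (-1 / x) + (2 : ℝ) ^ (-1 / (1 - x)) ≤ 1 := by
  rintro x ⟨hx0, hx1⟩
  have h1x : 0 < 1 - x := by linarith
  have hA : (0 : ℝ) < (2 : ℝ) ^ (-1 / x) := Real.rpow_pos_of_pos (by norm_num) _
  have hB : (0 : ℝ) < (2 : ℝ) ^ (-1 / (1 - x)) := Real.rpow_pos_of_pos (by norm_num) _
  constructor
  · -- lower bound: one of x, 1-x is ≥ 1/2, so that term ≥ 2^{-2} = 1/4
    have h14 : (2 : ℝ) ^ (-2 : ℝ) = 1 / 4 := by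
      rw [Real.rpow_neg (by norm_num), show ((2:ℝ):ℝ) = ((2:ℕ):ℝ) by norm_num,
        Real.rpow_natCast]
      norm_num
    rcases le_or_gt x (1/2) with h | h
    · have hy : (1:ℝ)/2 ≤ 1 - x := by linarith
      have he : (-2 : ℝ) ≤ -1 / (1 - x) := by
        rw [neg_div, neg_le_neg_iff, div_le_iff₀ h1x]; linarith
      have := Real.rpow_le_rpow_of_exponent_le (by norm_num : (1:ℝ) ≤ 2) he
      rw [h14] at this
      linarith
    · have he : (-2 : ℝ) ≤ -1 / x := by
        rw [neg_div, neg_le_neg_iff, div_le_iff₀ hx0]; linarith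
      have := Real.rpow_le_rpow_of_exponent_le (by norm_num : (1:ℝ) ≤ 2) he
      rw [h14] at this
      linarith
  · have l1 := rpow_neg_inv_le hx0 hx1.le
    have l2 := rpow_neg_inv_le h1x (by linarith)
    linarith
end

section
/- Let K ⊆ ℝ^d be nonempty, closed and convex, f : ℝ^d → ℝ be L-smooth (i.e., ∇f is L-Lipschitz) and G-Lipschitz on K, and let ε > 0, δ ∈ (0, √(2ε/L)). Suppose x* ∈ K satisfies ‖x* - Π_K(x* - ∇f(x*))‖₂ < α, where α ≤ (√((G+δ)² + 4(ε - Lδ²/2)) - (G+δ))/2. Then f(x*) < f(x) + ε for all x ∈ K with ‖x - x*‖₂ ≤ δ; i.e., x* is an (ε,δ)-local minimum of f on K. -/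
open RealInnerProductSpace

section aux
variable {d : ℕ}

lemma lineDeriv_aux (f : EuclideanSpace ℝ (Fin d) → ℝ) (hdiff : Differentiable ℝ f)
    (u v : EuclideanSpace ℝ (Fin d)) (t : ℝ) :
    HasDerivAt (fun s : ℝ => f (u + s • v)) ⟪gradient f (u + t • v), v⟫ t := by
  have hline : HasDerivAt (fun s : ℝ => u + s • v) v t := by
    simpa using ((hasDerivAt_id t).smul_const v).const_add u
  exact ((hdiff (u + t • v)).hasGradientAt.hasFDerivAt).comp_hasDerivAt t hline

-- descent lemma (lower bound form)
lemma descent_aux (K : Set (EuclideanSpace ℝ (Fin d))) (hKconv : Convex ℝ K)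
    (f : EuclideanSpace ℝ (Fin d) → ℝ) (hdiff : Differentiable ℝ f)
    (L : ℝ) (hL : 0 < L)
    (hsmooth : ∀ x ∈ K, ∀ y ∈ K, ‖gradient f x - gradient f y‖ ≤ L * ‖x - y‖)
    (u : EuclideanSpace ℝ (Fin d)) (hu : u ∈ K)
    (w : EuclideanSpace ℝ (Fin d)) (hw : w ∈ K) :
    f u + ⟪gradient f u, w - u⟫ - L / 2 * ‖w - u‖ ^ 2 ≤ f w := by
  set v := w - u with hv
  set g := gradient f u with hgdef
  set ψ : ℝ → ℝ := fun t => f (u + t • v) - t * ⟪g, v⟫ + L / 2 * ‖v‖ ^ 2 * t ^ 2 with hψ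
  have hmem : ∀ t ∈ Set.Icc (0:ℝ) 1, u + t • v ∈ K := by
    intro t ht
    have := hKconv.add_smul_sub_mem hu hw ht
    simpa [hv] using this
  have hder : ∀ t : ℝ, HasDerivAt ψ
      (⟪gradient f (u + t • v), v⟫ - ⟪g, v⟫ + L / 2 * ‖v‖ ^ 2 * (2 * t)) t := by
    intro t
    have h1 := lineDeriv_aux f hdiff u v t
    have h2 : HasDerivAt (fun s : ℝ => s * ⟪g, v⟫) ⟪g, v⟫ t := by
      simpa using (hasDerivAt_id t).mul_const ⟪g, v⟫
    have h3 : HasDerivAt (fun s : ℝ => L / 2 * ‖v‖ ^ 2 * s ^ 2) (L / 2 * ‖v‖ ^ 2 * (2 * t)) t := by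
      have := (hasDerivAt_pow 2 t).const_mul (L / 2 * ‖v‖ ^ 2)
      simpa [mul_comm, mul_assoc] using this
    exact (h1.sub h2).add h3
  have hderiv_nonneg : ∀ t ∈ Set.Icc (0:ℝ) 1,
      0 ≤ ⟪gradient f (u + t • v), v⟫ - ⟪g, v⟫ + L / 2 * ‖v‖ ^ 2 * (2 * t) := by
    intro t ht
    have hmemt := hmem t ht
    have hCS : |⟪gradient f (u + t • v) - g, v⟫| ≤ ‖gradient f (u + t • v) - g‖ * ‖v‖ :=
      abs_real_inner_le_norm _ _
    have hLip : ‖gradient f (u + t • v) - g‖ ≤ L * (t * ‖v‖) := by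
      have := hsmooth (u + t • v) hmemt u hu
      simpa [hgdef, norm_smul, abs_of_nonneg ht.1] using this
    have hinner : ⟪gradient f (u + t • v), v⟫ - ⟪g, v⟫ = ⟪gradient f (u + t • v) - g, v⟫ := by
      rw [inner_sub_left]
    have hnv : (0:ℝ) ≤ ‖v‖ := norm_nonneg _
    nlinarith [abs_nonneg (⟪gradient f (u + t • v) - g, v⟫ : ℝ), neg_abs_le (⟪gradient f (u + t • v) - g, v⟫ : ℝ), mul_le_mul_of_nonneg_right hLip hnv]
  have hcont : ContinuousOn ψ (Set.Icc 0 1) := fun t _ => ((hder t).continuousAt).continuousWithinAt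
  have hmono : MonotoneOn ψ (Set.Icc (0:ℝ) 1) := by
    apply monotoneOn_of_deriv_nonneg (convex_Icc 0 1) hcont
    · intro t ht
      exact ((hder t).differentiableAt).differentiableWithinAt
    · intro t ht
      rw [interior_Icc] at ht
      rw [(hder t).deriv]
      exact hderiv_nonneg t ⟨ht.1.le, ht.2.le⟩
  have := hmono (Set.left_mem_Icc.2 zero_le_one) (Set.right_mem_Icc.2 zero_le_one) zero_le_one
  simp only [hψ] at this
  simp only [zero_smul, add_zero, one_smul, zero_mul, sub_zero, one_pow, mul_one,
    ne_eq, OfNat.ofNat_ne_zero, not_false_eq_true, zero_pow, mul_zero] at this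
  have huv : u + v = w := by simp [hv]
  rw [huv] at this
  linarith

-- directional derivative bound
lemma dirderiv_aux (K : Set (EuclideanSpace ℝ (Fin d))) (hKconv : Convex ℝ K)
    (f : EuclideanSpace ℝ (Fin d) → ℝ) (hdiff : Differentiable ℝ f)
    (G : ℝ)
    (hlip : ∀ x ∈ K, ∀ y ∈ K, |f x - f y| ≤ G * ‖x - y‖)
    (u : EuclideanSpace ℝ (Fin d)) (hu : u ∈ K)
    (w : EuclideanSpace ℝ (Fin d)) (hw : w ∈ K) :
    -(G * ‖w - u‖) ≤ ⟪gradient f u, w - u⟫ := by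
  set v := w - u with hv
  have hmem : ∀ t ∈ Set.Icc (0:ℝ) 1, u + t • v ∈ K := by
    intro t ht
    simpa [hv] using hKconv.add_smul_sub_mem hu hw ht
  have hder : HasDerivAt (fun s : ℝ => f (u + s • v)) ⟪gradient f u, v⟫ 0 := by
    have := lineDeriv_aux f hdiff u v 0
    simpa using this
  have hderW : HasDerivWithinAt (fun s : ℝ => f (u + s • v)) ⟪gradient f u, v⟫ (Set.Ici 0) 0 :=
    hder.hasDerivWithinAt
  rw [hasDerivWithinAt_iff_tendsto_slope] at hderW
  have hset : (Set.Ici (0:ℝ)) \ {0} = Set.Ioi 0 := by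
    ext t; simp [Set.mem_Ici, Set.mem_Ioi, lt_iff_le_and_ne, eq_comm]
  rw [hset] at hderW
  refine ge_of_tendsto hderW ?_
  have hev : ∀ᶠ t in nhdsWithin (0:ℝ) (Set.Ioi 0), t ∈ Set.Ioc (0:ℝ) 1 := by
    filter_upwards [Ioo_mem_nhdsGT_of_mem (Set.left_mem_Ico.2 one_pos)] with t ht
    exact ⟨ht.1, ht.2.le⟩
  filter_upwards [hev] with t ht
  have hmemt : u + t • v ∈ K := hmem t ⟨ht.1.le, ht.2⟩
  have hl := hlip (u + t • v) hmemt u hu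
  have hnorm : ‖u + t • v - u‖ = t * ‖v‖ := by
    simp [norm_smul, abs_of_nonneg ht.1.le]
  rw [hnorm] at hl
  have hlow : -(G * (t * ‖v‖)) ≤ f (u + t • v) - f u := by
    have := neg_abs_le (f (u + t • v) - f u)
    linarith
  have hslope : slope (fun s : ℝ => f (u + s • v)) 0 t
      = (f (u + t • v) - f u) / t := by
    simp [slope_def_field, div_eq_inv_mul]
  rw [hslope]
  rw [le_div_iff₀ ht.1]
  nlinarith
end aux

theorem stmt6 {d : ℕ} (K : Set (EuclideanSpace ℝ (Fin d)))
    (hKne : K.Nonempty) (hKcl : IsClosed K) (hKconv : Convex ℝ K)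
    (f : EuclideanSpace ℝ (Fin d) → ℝ) (hdiff : Differentiable ℝ f)
    (L G ε δ α : ℝ) (hL : 0 < L) (hG : 0 < G)
    (hsmooth : ∀ x ∈ K, ∀ y ∈ K, ‖gradient f x - gradient f y‖ ≤ L * ‖x - y‖)
    (hlip : ∀ x ∈ K, ∀ y ∈ K, |f x - f y| ≤ G * ‖x - y‖)
    (hε : 0 < ε) (hδ0 : 0 < δ) (hδ : δ < Real.sqrt (2 * ε / L))
    (hα : α ≤ (Real.sqrt ((G + δ) ^ 2 + 4 * (ε - L / 2 * δ ^ 2)) - (G + δ)) / 2)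
    (xs : EuclideanSpace ℝ (Fin d)) (hxs : xs ∈ K)
    (p : EuclideanSpace ℝ (Fin d)) (hpK : p ∈ K)
    (hproj : ∀ z ∈ K, ⟪(xs - gradient f xs) - p, z - p⟫ ≤ 0)
    (hfix : ‖xs - p‖ < α) :
    ∀ x ∈ K, ‖x - xs‖ ≤ δ → f xs < f x + ε := by
  intro x hx hxδ
  have ha0 : (0:ℝ) ≤ ‖xs - p‖ := norm_nonneg _
  have hα0 : 0 < α := lt_of_le_of_lt ha0 hfix
  have hδ2 : δ ^ 2 < 2 * ε / L := by
    have := (Real.lt_sqrt hδ0.le).mp hδ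
    simpa using this
  have hεδ : L / 2 * δ ^ 2 < ε := by
    rw [lt_div_iff₀ hL] at hδ2; nlinarith
  have hkey : α ^ 2 + α * (G + δ) ≤ ε - L / 2 * δ ^ 2 := by
    have hDnn : 0 ≤ (G + δ) ^ 2 + 4 * (ε - L / 2 * δ ^ 2) := by nlinarith
    have h1 : 2 * α + (G + δ) ≤ Real.sqrt ((G + δ) ^ 2 + 4 * (ε - L / 2 * δ ^ 2)) := by
      linarith
    have h2 := pow_le_pow_left₀ (by linarith : (0:ℝ) ≤ 2 * α + (G + δ)) h1 2
    rw [Real.sq_sqrt hDnn] at h2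
    nlinarith
  have hdesc := descent_aux K hKconv f hdiff L hL hsmooth xs hxs x hx
  have hdir := dirderiv_aux K hKconv f hdiff G hlip xs hxs p hpK
  have hpr := hproj x hx
  have hpr' : ⟪xs - p, x - p⟫ - ⟪gradient f xs, x - p⟫ ≤ 0 := by
    have he : xs - gradient f xs - p = (xs - p) - gradient f xs := by abel
    rw [he, inner_sub_left] at hpr
    linarith
  have hdecomp : ⟪gradient f xs, x - xs⟫
      = ⟪gradient f xs, x - p⟫ + ⟪gradient f xs, p - xs⟫ := by
    rw [← inner_add_right]
    congr 1
    abel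
  have hxp : ⟪xs - p, x - p⟫ = ⟪xs - p, x - xs⟫ + ‖xs - p‖ ^ 2 := by
    have he : (x : EuclideanSpace ℝ (Fin d)) - p = (x - xs) + (xs - p) := by abel
    rw [he, inner_add_right, real_inner_self_eq_norm_sq]
  have hCS : -(‖xs - p‖ * ‖x - xs‖) ≤ ⟪xs - p, x - xs⟫ := by
    have h1 := abs_real_inner_le_norm (xs - p) (x - xs)
    have h2 := neg_abs_le (⟪xs - p, x - xs⟫ : ℝ)
    linarith
  have hdir' : -(G * ‖xs - p‖) ≤ ⟪gradient f xs, p - xs⟫ := by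
    have he : ‖p - xs‖ = ‖xs - p‖ := norm_sub_rev p xs
    rw [he] at hdir
    exact hdir
  have hxxs : (0:ℝ) ≤ ‖x - xs‖ := norm_nonneg _
  have hsq : ‖x - xs‖ ^ 2 ≤ δ ^ 2 := by nlinarith
  have hax : ‖xs - p‖ * ‖x - xs‖ ≤ ‖xs - p‖ * δ := mul_le_mul_of_nonneg_left hxδ ha0
  have hLsq : L / 2 * ‖x - xs‖ ^ 2 ≤ L / 2 * δ ^ 2 :=
    mul_le_mul_of_nonneg_left hsq (by linarith)
  have i1 : -(‖xs - p‖ * δ) + ‖xs - p‖ ^ 2 - G * ‖xs - p‖ ≤ ⟪gradient f xs, x - xs⟫ := by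
    linarith
  have hfinal : f xs - (‖xs - p‖ * δ + G * ‖xs - p‖ + L / 2 * δ ^ 2) ≤ f x := by
    have := sq_nonneg ‖xs - p‖
    linarith
  have hstrict : ‖xs - p‖ * δ + G * ‖xs - p‖ + L / 2 * δ ^ 2 < ε := by
    have hm := mul_lt_mul_of_pos_right hfix (by linarith : (0:ℝ) < δ + G)
    have e1 : ‖xs - p‖ * δ + G * ‖xs - p‖ = ‖xs - p‖ * (δ + G) := by ring
    have e2 : α * (δ + G) = α * (G + δ) := by ring
    have h4 : (0:ℝ) ≤ α ^ 2 := sq_nonneg α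
    linarith
  linarith
end

section
/- Let K ⊆ ℝ^d be nonempty, closed and convex, f : ℝ^d → ℝ be L-smooth on K, and α > 0. Set ε = α²L/(5L+2)² and δ = √(ε/L). If x* ∈ K satisfies f(x*) < f(x) + ε for all x ∈ K with ‖x - x*‖₂ ≤ δ (an (ε,δ)-local minimum), then ‖x* - Π_K(x* - ∇f(x*))‖₂ < α/2. -/
open RealInnerProductSpace

lemma line_hasDerivAt {d : ℕ} (f : EuclideanSpace ℝ (Fin d) → ℝ) (hdiff : Differentiable ℝ f)
    (a v : EuclideanSpace ℝ (Fin d)) (s : ℝ) :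
    HasDerivAt (fun t : ℝ => f (a + t • v)) ⟪gradient f (a + s • v), v⟫ s := by
  have h1 : HasDerivAt (fun t : ℝ => a + t • v) v s := by
    simpa using ((hasDerivAt_id s).smul_const v).const_add a
  have h2 := (hdiff (a + s • v)).hasGradientAt.hasFDerivAt
  simpa [InnerProductSpace.toDual_apply_apply, Function.comp_def] using h2.comp_hasDerivAt s h1

lemma descent {d : ℕ} (K : Set (EuclideanSpace ℝ (Fin d)))
    (f : EuclideanSpace ℝ (Fin d) → ℝ) (hdiff : Differentiable ℝ f)
    (L : ℝ) (hL : 0 ≤ L)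
    (hsmooth : ∀ x ∈ K, ∀ y ∈ K, ‖gradient f x - gradient f y‖ ≤ L * ‖x - y‖)
    (a v : EuclideanSpace ℝ (Fin d))
    (hseg : ∀ s ∈ Set.Icc (0:ℝ) 1, a + s • v ∈ K) :
    f (a + v) ≤ f a + ⟪gradient f a, v⟫ + L / 2 * ‖v‖ ^ 2 := by
  set g : ℝ → ℝ := fun s => f (a + s • v) - s * ⟪gradient f a, v⟫ - L * s ^ 2 / 2 * ‖v‖ ^ 2
    with hg
  have hderiv : ∀ s : ℝ, HasDerivAt g
      (⟪gradient f (a + s • v), v⟫ - ⟪gradient f a, v⟫ - L * s * ‖v‖ ^ 2) s := by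
    intro s
    have h1 := line_hasDerivAt f hdiff a v s
    have h2 : HasDerivAt (fun t : ℝ => t * ⟪gradient f a, v⟫) ⟪gradient f a, v⟫ s := by
      simpa using (hasDerivAt_id s).mul_const _
    have h3 : HasDerivAt (fun t : ℝ => L * t ^ 2 / 2 * ‖v‖ ^ 2) (L * s * ‖v‖ ^ 2) s := by
      have := ((hasDerivAt_pow 2 s).const_mul L).div_const 2
      have := this.mul_const (‖v‖ ^ 2)
      refine this.congr_deriv ?_
      ring
    exact (h1.sub h2).sub h3
  have hgdiff : Differentiable ℝ g := fun s => (hderiv s).differentiableAt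
  have hanti : AntitoneOn g (Set.Icc 0 1) := by
    apply antitoneOn_of_deriv_nonpos (convex_Icc 0 1) hgdiff.continuous.continuousOn
      (fun s _ => (hgdiff s).differentiableWithinAt)
    intro s hs
    rw [interior_Icc] at hs
    rw [(hderiv s).deriv]
    have hmem : a + s • v ∈ K := hseg s ⟨hs.1.le, hs.2.le⟩
    have hmem0 : a ∈ K := by simpa using hseg 0 ⟨le_refl 0, zero_le_one⟩
    have hlip := hsmooth _ hmem _ hmem0
    have hin : ⟪gradient f (a + s • v) - gradient f a, v⟫
        ≤ ‖gradient f (a + s • v) - gradient f a‖ * ‖v‖ :=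
      real_inner_le_norm _ _
    rw [inner_sub_left] at hin
    have hnorm : ‖(a + s • v) - a‖ = s * ‖v‖ := by
      simp [norm_smul, abs_of_nonneg hs.1.le]
    rw [hnorm] at hlip
    nlinarith [norm_nonneg (gradient f (a + s • v) - gradient f a), norm_nonneg v,
      mul_le_mul_of_nonneg_right hlip (norm_nonneg v)]
  have := hanti (Set.left_mem_Icc.2 zero_le_one) (Set.right_mem_Icc.2 zero_le_one) zero_le_one
  simp only [hg] at this
  simp only [zero_smul, add_zero, one_smul, zero_mul, sub_zero, one_pow, mul_one] at this
  linarith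

set_option maxHeartbeats 1000000 in
theorem stmt7 {d : ℕ} (K : Set (EuclideanSpace ℝ (Fin d)))
    (hKne : K.Nonempty) (hKcl : IsClosed K) (hKconv : Convex ℝ K)
    (f : EuclideanSpace ℝ (Fin d) → ℝ) (hdiff : Differentiable ℝ f)
    (L α : ℝ) (hL : 0 < L) (hα : 0 < α)
    (hsmooth : ∀ x ∈ K, ∀ y ∈ K, ‖gradient f x - gradient f y‖ ≤ L * ‖x - y‖)
    (xs : EuclideanSpace ℝ (Fin d)) (hxs : xs ∈ K)
    (hlocal : ∀ x ∈ K, ‖x - xs‖ ≤ Real.sqrt ((α ^ 2 * L / (5 * L + 2) ^ 2) / L) →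
      f xs < f x + α ^ 2 * L / (5 * L + 2) ^ 2)
    (p : EuclideanSpace ℝ (Fin d)) (hpK : p ∈ K)
    (hproj : ∀ z ∈ K, ⟪(xs - gradient f xs) - p, z - p⟫ ≤ 0) :
    ‖xs - p‖ < α / 2 := by
  set ε : ℝ := α ^ 2 * L / (5 * L + 2) ^ 2 with hε
  set r : ℝ := ‖xs - p‖ with hrdef
  have h5L : (0:ℝ) < 5 * L + 2 := by linarith
  have hεpos : 0 < ε := by positivity
  -- simplify the radius
  have hδ : Real.sqrt (ε / L) = α / (5 * L + 2) := by
    have : ε / L = (α / (5 * L + 2)) ^ 2 := by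
      rw [hε]
      field_simp
    rw [this, Real.sqrt_sq (by positivity)]
  clear_value ε
  by_contra hcon
  push_neg at hcon
  have hr2 : α / 2 ≤ r := hcon
  have hrpos : 0 < r := lt_of_lt_of_le (by positivity) hr2
  -- projection inequality
  have hB : r ^ 2 ≤ ⟪gradient f xs, xs - p⟫ := by
    have h1 := hproj xs hxs
    have h2 : (xs - gradient f xs) - p = (xs - p) - gradient f xs := by abel
    rw [h2, inner_sub_left, real_inner_self_eq_norm_sq] at h1
    linarith
  -- the step size
  set t : ℝ := min 1 (min (1 / L) ((α / (5 * L + 2)) / r)) with htdef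
  have ht0 : 0 < t := by
    apply lt_min one_pos
    apply lt_min (by positivity) (by positivity)
  have ht1 : t ≤ 1 := min_le_left _ _
  have htL : t ≤ 1 / L := le_trans (min_le_right _ _) (min_le_left _ _)
  have htδ' : t ≤ (α / (5 * L + 2)) / r := le_trans (min_le_right _ _) (min_le_right _ _)
  have htδ : t * r ≤ α / (5 * L + 2) := by
    have := mul_le_mul_of_nonneg_right htδ' hrpos.le
    rwa [div_mul_cancel₀ _ (ne_of_gt hrpos)] at this
  have htL' : t * L ≤ 1 := by
    have := mul_le_mul_of_nonneg_right htL hL.le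
    rwa [one_div, inv_mul_cancel₀ (ne_of_gt hL)] at this
  -- segment membership
  have hseg : ∀ s ∈ Set.Icc (0:ℝ) 1, xs + s • (t • (p - xs)) ∈ K := by
    intro s hs
    have hst0 : 0 ≤ s * t := mul_nonneg hs.1 ht0.le
    have hst1 : s * t ≤ 1 := mul_le_one₀ hs.2 ht0.le ht1
    have hmem := hKconv hxs hpK (by linarith : (0:ℝ) ≤ 1 - s * t) hst0 (by ring)
    have : (1 - s * t) • xs + (s * t) • p = xs + s • (t • (p - xs)) := by
      rw [smul_smul, smul_sub, sub_smul, one_smul]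
      abel
    rwa [this] at hmem
  -- descent inequality
  have hdesc := descent K f hdiff L hL.le hsmooth xs (t • (p - xs)) hseg
  -- norms and inner products
  have hnv : ‖t • (p - xs)‖ = t * r := by
    rw [norm_smul, Real.norm_eq_abs, abs_of_nonneg ht0.le, hrdef, norm_sub_rev]
  have hip : ⟪gradient f xs, t • (p - xs)⟫ = -(t * ⟪gradient f xs, xs - p⟫) := by
    rw [real_inner_smul_right]
    have : p - xs = -(xs - p) := by abel
    rw [this, inner_neg_right]
    ring
  -- local minimality
  have hmemt : xs + t • (p - xs) ∈ K := by
    have := hseg 1 ⟨zero_le_one, le_refl 1⟩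
    simpa using this
  have hnorm1 : ‖(xs + t • (p - xs)) - xs‖ = t * r := by
    rw [add_sub_cancel_left, hnv]
  have hloc := hlocal (xs + t • (p - xs)) hmemt (by rw [hnorm1, hδ]; exact htδ)
  -- combine
  rw [hnv, hip] at hdesc
  have hkey : 0 < -(t * r ^ 2) + L / 2 * (t * r) ^ 2 + ε := by
    have h1 : t * r ^ 2 ≤ t * ⟪gradient f xs, xs - p⟫ :=
      mul_le_mul_of_nonneg_left hB ht0.le
    calc (0:ℝ) < f (xs + t • (p - xs)) + ε - f xs := by linarith
    _ ≤ -(t * ⟪gradient f xs, xs - p⟫) + L / 2 * (t * r) ^ 2 + ε := by linarith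
    _ ≤ -(t * r ^ 2) + L / 2 * (t * r) ^ 2 + ε := by linarith
  -- final contradiction: ε ≤ t * r^2 / 2 and L/2 * (t r)^2 ≤ t r^2 / 2
  have hr2sq : α ^ 2 / 4 ≤ r ^ 2 := by nlinarith
  have hεle : ε ≤ t * r ^ 2 / 2 := by
    have hc : t = 1 ∨ t = 1 / L ∨ t = (α / (5 * L + 2)) / r := by
      rcases min_cases 1 (min (1 / L) ((α / (5 * L + 2)) / r)) with h | h
      · exact Or.inl h.1
      · rcases min_cases (1 / L) ((α / (5 * L + 2)) / r) with h' | h'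
        · exact Or.inr (Or.inl (h.1.trans h'.1))
        · exact Or.inr (Or.inr (h.1.trans h'.1))
    rcases hc with h | h | h
    · -- t = 1 : ε ≤ α²/8 ≤ r²/2
      have h1 : ε ≤ α ^ 2 / 8 := by
        rw [hε, div_le_div_iff₀ (by positivity) (by norm_num)]
        nlinarith [mul_nonneg (sq_nonneg α) (sq_nonneg L),
          mul_nonneg (sq_nonneg α) hL.le, sq_nonneg α]
      rw [h]
      linarith
    · -- t = 1/L : ε * L ≤ α²/8 ≤ r²/2
      have h1 : ε * L ≤ α ^ 2 / 8 := by
        rw [hε, div_mul_eq_mul_div, div_le_div_iff₀ (by positivity) (by norm_num)]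
        nlinarith [mul_nonneg (sq_nonneg α) (sq_nonneg L),
          mul_nonneg (sq_nonneg α) hL.le, sq_nonneg α, sq_nonneg (α * L)]
      have h2 : ε * L ≤ r ^ 2 / 2 := by linarith
      have h3 := mul_le_mul_of_nonneg_right h2 (le_of_lt (by positivity : (0:ℝ) < 1 / L))
      have heq : ε * L * (1 / L) = ε := by field_simp
      rw [h]
      rw [heq] at h3
      calc ε ≤ r ^ 2 / 2 * (1 / L) := h3
        _ = 1 / L * r ^ 2 / 2 := by ring
    · -- t = δ/r : ε ≤ δ·r/2
      have hq : α / (5 * L + 2) / r * r ^ 2 / 2 = α * r / (2 * (5 * L + 2)) := by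
        field_simp
      rw [h, hq, hε, div_le_div_iff₀ (by positivity) (by positivity)]
      have hm : α * (α / 2) * (5 * L + 2) ^ 2 ≤ α * r * (5 * L + 2) ^ 2 := by
        have := mul_le_mul_of_nonneg_left hr2 hα.le
        nlinarith [sq_nonneg (5 * L + 2)]
      nlinarith [mul_nonneg (mul_nonneg (sq_nonneg α) h5L.le)
        (by linarith : (0:ℝ) ≤ L + 2)]
  have hfin : L / 2 * (t * r) ^ 2 ≤ t * r ^ 2 / 2 := by
    nlinarith [sq_nonneg r, mul_nonneg ht0.le (sq_nonneg r)]
  linarith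
end

section
/- Let f(x,y) = Σ_{j=1}^m P_j(x)·(w_j - z_j)² where each P_j(x) ∈ [0,1]. Fix a clause j and points (x*, w*, z*) ∈ [0,1]^{n+2m}. If |w*_j - z*_j| ≥ 1/4, then decreasing w_j to z*_j decreases f by at least P_j(x*)/16; if |w*_j - z*_j| ≤ 1/4, then moving z*_j to 0 or 1 (whichever is farther from w*_j) increases f by at least P_j(x*)/16. Consequently, if (x*, w*, z*) is an (ε, 1)-local min-max equilibrium (min over (x,w), max over z) of f on [0,1]^{n+2m}, then P_j(x*) ≤ 16ε for every j. -/
theorem stmt18 (n m : ℕ) (P : Fin m → (Fin n → ℝ) → ℝ)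
    (hP : ∀ (j : Fin m) (x : Fin n → ℝ), (∀ i, x i ∈ Set.Icc (0 : ℝ) 1) →
      P j x ∈ Set.Icc (0 : ℝ) 1)
    (f : (Fin n → ℝ) → (Fin m → ℝ) → (Fin m → ℝ) → ℝ)
    (hf : ∀ x w z, f x w z = ∑ j, P j x * (w j - z j) ^ 2)
    (xs : Fin n → ℝ) (ws zs : Fin m → ℝ) (ε : ℝ)
    (hxs : ∀ i, xs i ∈ Set.Icc (0 : ℝ) 1) (hws : ∀ j, ws j ∈ Set.Icc (0 : ℝ) 1)
    (hzs : ∀ j, zs j ∈ Set.Icc (0 : ℝ) 1) :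
    (∀ j : Fin m, 1 / 4 ≤ |ws j - zs j| →
      f xs (Function.update ws j (zs j)) zs ≤ f xs ws zs - P j xs / 16) ∧
    (∀ j : Fin m, |ws j - zs j| ≤ 1 / 4 →
      ∃ b : ℝ, (b = 0 ∨ b = 1) ∧
        f xs ws zs + P j xs / 16 ≤ f xs ws (Function.update zs j b)) ∧
    ((∀ (x : Fin n → ℝ) (w : Fin m → ℝ), (∀ i, x i ∈ Set.Icc (0 : ℝ) 1) →
        (∀ j, w j ∈ Set.Icc (0 : ℝ) 1) →
        Real.sqrt (∑ i, (x i - xs i) ^ 2 + ∑ j, (w j - ws j) ^ 2) ≤ 1 →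
        f xs ws zs < f x w zs + ε) →
      (∀ z : Fin m → ℝ, (∀ j, z j ∈ Set.Icc (0 : ℝ) 1) →
        Real.sqrt (∑ j, (z j - zs j) ^ 2) ≤ 1 →
        f xs ws z - ε < f xs ws zs) →
      ∀ j : Fin m, P j xs ≤ 16 * ε) := by
  have hPj : ∀ j, 0 ≤ P j xs ∧ P j xs ≤ 1 := fun j => ⟨(hP j xs hxs).1, (hP j xs hxs).2⟩
  have keyw : ∀ (c : ℝ) (j : Fin m),
      f xs (Function.update ws j c) zs
        = f xs ws zs - P j xs * (ws j - zs j)^2 + P j xs * (c - zs j)^2 := by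
    intro c j
    rw [hf, hf, ← Finset.sum_erase_add _ _ (Finset.mem_univ j),
      ← Finset.sum_erase_add Finset.univ (fun k => P k xs * (ws k - zs k)^2) (Finset.mem_univ j)]
    have h : ∑ k ∈ Finset.univ.erase j, P k xs * (Function.update ws j c k - zs k)^2
        = ∑ k ∈ Finset.univ.erase j, P k xs * (ws k - zs k)^2 :=
      Finset.sum_congr rfl fun k hk => by rw [Function.update_of_ne (Finset.ne_of_mem_erase hk)]
    rw [h, Function.update_self]; ring
  have keyz : ∀ (c : ℝ) (j : Fin m),
      f xs ws (Function.update zs j c)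
        = f xs ws zs - P j xs * (ws j - zs j)^2 + P j xs * (ws j - c)^2 := by
    intro c j
    rw [hf, hf, ← Finset.sum_erase_add _ _ (Finset.mem_univ j),
      ← Finset.sum_erase_add Finset.univ (fun k => P k xs * (ws k - zs k)^2) (Finset.mem_univ j)]
    have h : ∑ k ∈ Finset.univ.erase j, P k xs * (ws k - Function.update zs j c k)^2
        = ∑ k ∈ Finset.univ.erase j, P k xs * (ws k - zs k)^2 :=
      Finset.sum_congr rfl fun k hk => by rw [Function.update_of_ne (Finset.ne_of_mem_erase hk)]
    rw [h, Function.update_self]; ring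
  have part1 : ∀ j : Fin m, 1 / 4 ≤ |ws j - zs j| →
      f xs (Function.update ws j (zs j)) zs ≤ f xs ws zs - P j xs / 16 := by
    intro j hj
    rw [keyw]
    have ha : 1/16 ≤ (ws j - zs j)^2 := by
      nlinarith [sq_abs (ws j - zs j), abs_nonneg (ws j - zs j)]
    nlinarith [mul_nonneg (hPj j).1 (by linarith : (0:ℝ) ≤ (ws j - zs j)^2 - 1/16)]
  have part2 : ∀ j : Fin m, |ws j - zs j| ≤ 1 / 4 →
      ∃ b : ℝ, (b = 0 ∨ b = 1) ∧
        f xs ws zs + P j xs / 16 ≤ f xs ws (Function.update zs j b) := by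
    intro j hj
    have hsq : (ws j - zs j)^2 ≤ 1/16 := by
      nlinarith [sq_abs (ws j - zs j), abs_nonneg (ws j - zs j)]
    rcases le_total (ws j) (1/2) with hw | hw
    · refine ⟨1, Or.inr rfl, ?_⟩
      rw [keyz]
      have h14 : 1/4 ≤ (ws j - 1)^2 := by nlinarith
      nlinarith [mul_nonneg (hPj j).1
        (by linarith : (0:ℝ) ≤ (ws j - 1)^2 - (ws j - zs j)^2 - 1/16)]
    · refine ⟨0, Or.inl rfl, ?_⟩
      rw [keyz]
      have h14 : 1/4 ≤ (ws j - 0)^2 := by nlinarith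
      nlinarith [mul_nonneg (hPj j).1
        (by linarith : (0:ℝ) ≤ (ws j - 0)^2 - (ws j - zs j)^2 - 1/16)]
  refine ⟨part1, part2, ?_⟩
  intro hmin hmax j
  rcases le_total (1/4) |ws j - zs j| with hc | hc
  · have hbd : ∀ k, Function.update ws j (zs j) k ∈ Set.Icc (0 : ℝ) 1 := by
      intro k
      rcases eq_or_ne k j with h | h
      · rw [h, Function.update_self]; exact hzs j
      · rw [Function.update_of_ne h]; exact hws k
    have hdist : Real.sqrt (∑ i, (xs i - xs i) ^ 2
        + ∑ k, (Function.update ws j (zs j) k - ws k) ^ 2) ≤ 1 := by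
      have h1 : ∑ i, (xs i - xs i) ^ 2 = (0:ℝ) := by simp
      have h2 : ∑ k, (Function.update ws j (zs j) k - ws k) ^ 2 = (zs j - ws j)^2 := by
        rw [Finset.sum_eq_single_of_mem j (Finset.mem_univ j)]
        · rw [Function.update_self]
        · intro k _ hk; rw [Function.update_of_ne hk]; ring
      rw [h1, h2, zero_add]
      apply Real.sqrt_le_one.mpr
      have := hws j; have := hzs j
      simp only [Set.mem_Icc] at *
      nlinarith [this.1, this.2]
    have := hmin xs (Function.update ws j (zs j)) hxs hbd hdist
    have := part1 j hc
    linarith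
  · obtain ⟨b, hb, hle⟩ := part2 j hc
    have hbd : ∀ k, Function.update zs j b k ∈ Set.Icc (0 : ℝ) 1 := by
      intro k
      rcases eq_or_ne k j with h | h
      · rw [h, Function.update_self]
        rcases hb with rfl | rfl <;> simp
      · rw [Function.update_of_ne h]; exact hzs k
    have hdist : Real.sqrt (∑ k, (Function.update zs j b k - zs k) ^ 2) ≤ 1 := by
      have h2 : ∑ k, (Function.update zs j b k - zs k) ^ 2 = (b - zs j)^2 := by
        rw [Finset.sum_eq_single_of_mem j (Finset.mem_univ j)]
        · rw [Function.update_self]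
        · intro k _ hk; rw [Function.update_of_ne hk]; ring
      rw [h2]
      apply Real.sqrt_le_one.mpr
      have h := hzs j
      simp only [Set.mem_Icc] at h
      rcases hb with rfl | rfl <;> nlinarith [h.1, h.2]
    have := hmax (Function.update zs j b) hbd hdist
    linarith
end
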